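/- arXiv:2201.10604 — 3 statements merged into one kernel-verified Lean document; each statement's English description precedes it below -/
import Mathlib

section
/- Let B be a bounded self-adjoint operator and A a closed operator with BA ⊆ AB. Then f(B)A ⊆ Af(B) for every continuous function f on σ(B). In particular, if B is positive, then √B·A ⊆ A·√B. -/
namespace FP

open LinearPMap
open scoped ComplexOrder

/-- The graph of the natural-domain composition `g ∘ f` of two partially defined
linear operators. -/
def compGraph {R E F G : Type*} [Ring R] [AddCommGroup E] [Module R E] [AddCommGroup F]
    [Module R F] [AddCommGroup G] [Module R G] (g : F →ₗ.[R] G) (f : E →ₗ.[R] F) :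
    Submodule R (E × G) where
  carrier := {p | ∃ y : F, (p.1, y) ∈ f.graph ∧ (y, p.2) ∈ g.graph}
  add_mem' := by
    rintro ⟨a, b⟩ ⟨c, d⟩ ⟨y, hy1, hy2⟩ ⟨z, hz1, hz2⟩
    exact ⟨y + z, f.graph.add_mem hy1 hz1, g.graph.add_mem hy2 hz2⟩
  zero_mem' := ⟨0, f.graph.zero_mem, g.graph.zero_mem⟩
  smul_mem' := by
    rintro c ⟨a, b⟩ ⟨y, h1, h2⟩
    exact ⟨c • y, f.graph.smul_mem c h1, g.graph.smul_mem c h2⟩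

/-- The product (composition) `g ∘ f` of two partially defined linear operators,
defined on its natural domain `{x ∈ D(f) : f x ∈ D(g)}`. -/
noncomputable def pComp {R E F G : Type*} [Ring R] [AddCommGroup E] [Module R E] [AddCommGroup F]
    [Module R F] [AddCommGroup G] [Module R G] (g : F →ₗ.[R] G) (f : E →ₗ.[R] F) :
    E →ₗ.[R] G :=
  (compGraph g f).toLinearPMap

variable {H : Type*} [NormedAddCommGroup H] [InnerProductSpace ℂ H] [CompleteSpace H]

/-- The everywhere-defined partial operator associated with a bounded operator. -/
def ofCLM (B : H →L[ℂ] H) : H →ₗ.[ℂ] H := B.toLinearMap.toPMap ⊤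

/-- A densely defined partial operator `T` is normal when it is closed and `T*T = TT*`
(products on their natural domains). -/
def IsNormalPMap (T : H →ₗ.[ℂ] H) : Prop :=
  Dense (T.domain : Set H) ∧ T.IsClosed ∧ pComp T† T = pComp T T†

/-- A partial operator is positive when `⟨Tx, x⟩ ≥ 0` for all `x ∈ D(T)`. -/
def IsPosPMap (T : H →ₗ.[ℂ] H) : Prop :=
  ∀ x : T.domain, (0 : ℂ) ≤ inner ℂ (T x) (x : H)

/-- A partial operator `A` is boundedly invertible if there is `B ∈ B(H)` with
`AB = I` and `BA ⊆ I`. -/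
def BoundedlyInvertible (A : H →ₗ.[ℂ] H) : Prop :=
  ∃ B : H →L[ℂ] H, pComp A (ofCLM B) = ofCLM 1 ∧ pComp (ofCLM B) A ≤ ofCLM 1

/-- The operator `λI - A` on the domain of `A`. -/
noncomputable def shift (l : ℂ) (A : H →ₗ.[ℂ] H) : H →ₗ.[ℂ] H :=
  (l • LinearMap.id : H →ₗ[ℂ] H) +ᵥ (-A)

/-- The spectrum of a partial operator. -/
def pSpectrum (A : H →ₗ.[ℂ] H) : Set ℂ :=
  {l | ¬ BoundedlyInvertible (shift l A)}

/-- Powers of a partial operator, on natural domains. -/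
noncomputable def pPow (A : H →ₗ.[ℂ] H) : ℕ → H →ₗ.[ℂ] H
  | 0 => ofCLM 1
  | n + 1 => pComp A (pPow A n)

noncomputable def polyAux (p : Polynomial ℂ) (A : H →ₗ.[ℂ] H) : ℕ → H →ₗ.[ℂ] H
  | 0 => p.coeff 0 • pPow A 0
  | n + 1 => polyAux p A n + p.coeff (n + 1) • pPow A (n + 1)

/-- The polynomial `p` applied to a partial operator `A`, on its natural domain. -/
noncomputable def polyApply (p : Polynomial ℂ) (A : H →ₗ.[ℂ] H) : H →ₗ.[ℂ] H :=
  polyAux p A p.natDegree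


lemma graph_ofCLM (T : H →L[ℂ] H) {x y : H} :
    (x, y) ∈ (ofCLM T).graph ↔ y = T x := by
  constructor
  · intro hxy
    rw [LinearPMap.mem_graph_iff] at hxy
    obtain ⟨z, hz1, hz2⟩ := hxy
    subst hz1
    exact hz2.symm
  · rintro rfl
    have : ((x : H), (ofCLM T) ⟨x, trivial⟩) ∈ (ofCLM T).graph :=
      (ofCLM T).mem_graph ⟨x, trivial⟩
    simpa [ofCLM, LinearMap.toPMap_apply] using this

lemma compGraph_valid (g f : H →ₗ.[ℂ] H) :
    ∀ x : H × H, x ∈ compGraph g f → x.fst = 0 → x.snd = 0 := by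
  rintro ⟨a, b⟩ ⟨y, h1, h2⟩ (rfl : a = 0)
  have hy : y = 0 := f.graph_fst_eq_zero_snd h1 rfl
  subst hy
  exact g.graph_fst_eq_zero_snd h2 rfl

lemma pComp_graph (g f : H →ₗ.[ℂ] H) : (pComp g f).graph = compGraph g f :=
  Submodule.toLinearPMap_graph_eq _ (compGraph_valid g f)

lemma comm_iff (T : H →L[ℂ] H) (A : H →ₗ.[ℂ] H) :
    pComp (ofCLM T) A ≤ pComp A (ofCLM T) ↔
      ∀ x y : H, (x, y) ∈ A.graph → (T x, T y) ∈ A.graph := by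
  rw [← LinearPMap.le_graph_iff, pComp_graph, pComp_graph]
  constructor
  · intro hle x y hxy
    have hmem : ((x, T y) : H × H) ∈ compGraph (ofCLM T) A :=
      ⟨y, hxy, (graph_ofCLM T).mpr rfl⟩
    obtain ⟨z, hz1, hz2⟩ := hle hmem
    rw [graph_ofCLM] at hz1
    rw [← hz1]
    exact hz2
  · rintro hP ⟨a, c⟩ ⟨y, h1, h2⟩
    rw [graph_ofCLM] at h2
    subst h2
    exact ⟨T a, (graph_ofCLM T).mpr rfl, hP a y h1⟩

set_option synthInstance.maxHeartbeats 1000000 in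
theorem stmt6 (B : H →L[ℂ] H) (A : H →ₗ.[ℂ] H) (hB : IsSelfAdjoint B)
    (hAdense : Dense (A.domain : Set H)) (hAclosed : A.IsClosed)
    (h : pComp (ofCLM B) A ≤ pComp A (ofCLM B)) :
    (∀ f : ℝ → ℝ, ContinuousOn f (spectrum ℝ B) →
      pComp (ofCLM (cfc f B)) A ≤ pComp A (ofCLM (cfc f B))) ∧
    (B.IsPositive → ∀ S : H →L[ℂ] H, S.IsPositive → S * S = B →
      pComp (ofCLM S) A ≤ pComp A (ofCLM S)) := by
  have hcomm : ∀ x y : H, (x, y) ∈ A.graph → (B x, B y) ∈ A.graph := (comm_iff B A).mp h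
  set M : Set (H →L[ℂ] H) :=
    {T | ∀ x y : H, (x, y) ∈ A.graph → (T x, T y) ∈ A.graph} with hM
  have hMclosed : IsClosed M := by
    have hrw : M = ⋂ (x : H) (y : H) (_ : (x, y) ∈ A.graph),
        (fun T : H →L[ℂ] H => ((T x, T y) : H × H)) ⁻¹' (A.graph : Set (H × H)) := by
      ext T; simp [hM]
    rw [hrw]
    refine isClosed_iInter fun x => isClosed_iInter fun y => isClosed_iInter fun _ => ?_
    exact hAclosed.preimage <| ((ContinuousLinearMap.apply ℂ H x).continuous.prodMk
      (ContinuousLinearMap.apply ℂ H y).continuous)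
  have hone : (1 : H →L[ℂ] H) ∈ M := fun x y hxy => by simpa using hxy
  have hmul : ∀ S T : H →L[ℂ] H, S ∈ M → T ∈ M → S * T ∈ M := fun S T hS hT x y hxy => by
    simpa using hS _ _ (hT _ _ hxy)
  have hadd : ∀ S T : H →L[ℂ] H, S ∈ M → T ∈ M → S + T ∈ M := fun S T hS hT x y hxy => by
    simpa using A.graph.add_mem (hS _ _ hxy) (hT _ _ hxy)
  have hsmul : ∀ (r : ℝ) (T : H →L[ℂ] H), T ∈ M → r • T ∈ M := fun r T hT x y hxy => by
    have := A.graph.smul_mem ((r : ℂ)) (hT _ _ hxy)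
    simpa [Prod.smul_mk, algebraMap_smul] using this
  have hmem : ∀ g : C(spectrum ℝ B, ℝ), cfcHom hB g ∈ M := by
    intro g
    induction g using ContinuousMap.induction_on_of_compact with
    | const r =>
      have hc : (ContinuousMap.const (spectrum ℝ B) r)
          = algebraMap ℝ C(spectrum ℝ B, ℝ) r := rfl
      rw [hc, AlgHomClass.commutes]
      have : algebraMap ℝ (H →L[ℂ] H) r = r • (1 : H →L[ℂ] H) := by
        simp [Algebra.algebraMap_eq_smul_one]
      rw [this]
      exact hsmul r 1 hone
    | id => rw [cfcHom_id hB]; exact hcomm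
    | star_id => rw [star_trivial, cfcHom_id hB]; exact hcomm
    | add f g hf hg => rw [_root_.map_add]; exact hadd _ _ hf hg
    | mul f g hf hg => rw [_root_.map_mul]; exact hmul _ _ hf hg
    | frequently f hf =>
      have hf' : f ∈ closure {g : C(spectrum ℝ B, ℝ) | cfcHom hB g ∈ M} :=
        mem_closure_iff_frequently.mpr hf
      have : cfcHom hB f ∈ closure M :=
        map_mem_closure (cfcHom_continuous hB) hf' fun g hg => hg
      rwa [hMclosed.closure_eq] at this
  have main : ∀ f : ℝ → ℝ, ContinuousOn f (spectrum ℝ B) →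
      pComp (ofCLM (cfc f B)) A ≤ pComp A (ofCLM (cfc f B)) := by
    intro f hf
    rw [comm_iff, cfc_apply f B hB hf]
    exact hmem _
  refine ⟨main, ?_⟩
  intro hBpos S hSpos hSS
  have hB0 : (0 : H →L[ℂ] H) ≤ B := (ContinuousLinearMap.nonneg_iff_isPositive B).mpr hBpos
  have hS0 : (0 : H →L[ℂ] H) ≤ S := (ContinuousLinearMap.nonneg_iff_isPositive S).mpr hSpos
  have hTS : S = cfc Real.sqrt B := by
    have h1 : CFC.sqrt B = S := CFC.sqrt_unique hSS hS0
    have hc : (0 : H →L[ℂ] H) ≤ cfc Real.sqrt B :=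
      cfc_nonneg fun x _ => Real.sqrt_nonneg x
    have h2 : CFC.sqrt B = cfc Real.sqrt B := by
      refine CFC.sqrt_unique ?_ hc
      rw [← cfc_mul Real.sqrt Real.sqrt B
        Real.continuous_sqrt.continuousOn Real.continuous_sqrt.continuousOn]
      have hco : cfc (fun x => Real.sqrt x * Real.sqrt x) B = cfc (id : ℝ → ℝ) B :=
        cfc_congr fun x hx => Real.mul_self_sqrt (spectrum_nonneg_of_nonneg hB0 hx)
      rw [hco]
      exact cfc_id ℝ B
    rw [← h1, h2]
  rw [hTS]
  exact main Real.sqrt Real.continuous_sqrt.continuousOn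

end FP
end

section
/- There exist a self-adjoint 2×2 complex matrix A and a positive 2×2 matrix B such that (AB)^n is self-adjoint (in fact zero) for every n ≥ 2, yet AB is not self-adjoint. -/
namespace FP

open LinearPMap
open scoped ComplexOrder

variable {H : Type*} [NormedAddCommGroup H] [InnerProductSpace ℂ H] [CompleteSpace H]

theorem stmt13 : ∃ A B : Matrix (Fin 2) (Fin 2) ℂ, A.IsHermitian ∧ B.PosSemidef ∧
    (∀ n : ℕ, 2 ≤ n → ((A * B) ^ n).IsHermitian ∧ (A * B) ^ n = 0) ∧
    ¬(A * B).IsHermitian := by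
  refine ⟨!![0,1;1,0], !![0,0;0,1], ?_, ?_, ?_, ?_⟩
  · ext i j; fin_cases i <;> fin_cases j <;>
      simp [Matrix.IsHermitian, Matrix.conjTranspose_apply]
  · rw [Matrix.posSemidef_iff_dotProduct_mulVec]
    constructor
    · ext i j; fin_cases i <;> fin_cases j <;> simp [Matrix.conjTranspose_apply]
    · intro x
      have : (dotProduct (star x) (Matrix.mulVec !![(0:ℂ),0;0,1] x))
          = star (x 1) * x 1 := by
        simp [dotProduct, Matrix.mulVec, Fin.sum_univ_two]
      rw [this]
      exact star_mul_self_nonneg (x 1)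
  · have hsq : (!![(0:ℂ),1;1,0] * !![0,0;0,1]) ^ 2 = 0 := by
      ext i j; fin_cases i <;> fin_cases j <;>
        simp [pow_two, Matrix.mul_apply, Fin.sum_univ_two]
    intro n hn
    obtain ⟨k, rfl⟩ := Nat.exists_eq_add_of_le hn
    have h0 : (!![(0:ℂ),1;1,0] * !![0,0;0,1]) ^ (2 + k) = 0 := by
      rw [pow_add, hsq, zero_mul]
    exact ⟨by rw [h0]; exact Matrix.isHermitian_zero, h0⟩
  · intro h
    have := congrFun (congrFun h.symm 0) 1
    simp [Matrix.conjTranspose_apply, Matrix.mul_apply, Fin.sum_univ_two] at this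

end FP
end

section
/- Let B ∈ B(H) and A an arbitrary operator such that B^n A is closed for some integer n ≥ 2 and BA is closable. Then BA is closed. -/
namespace FP

open LinearPMap
open scoped ComplexOrder

variable {H : Type*} [NormedAddCommGroup H] [InnerProductSpace ℂ H] [CompleteSpace H]

lemma pComp_graph_s15 {R E F G : Type*} [Ring R] [AddCommGroup E] [Module R E] [AddCommGroup F]
    [Module R F] [AddCommGroup G] [Module R G] (g : F →ₗ.[R] G) (f : E →ₗ.[R] F) :
    (pComp g f).graph = compGraph g f := by
  apply Submodule.toLinearPMap_graph_eq
  rintro ⟨a, b⟩ ⟨y, h1, h2⟩ (ha : a = 0)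
  have hy : y = 0 := f.graph_fst_eq_zero_snd h1 ha
  exact g.graph_fst_eq_zero_snd h2 hy

lemma mem_compGraph_iff {R E F G : Type*} [Ring R] [AddCommGroup E] [Module R E] [AddCommGroup F]
    [Module R F] [AddCommGroup G] [Module R G] (g : F →ₗ.[R] G) (f : E →ₗ.[R] F) (p : E × G) :
    p ∈ compGraph g f ↔ ∃ y : F, (p.1, y) ∈ f.graph ∧ (y, p.2) ∈ g.graph := Iff.rfl

lemma mem_ofCLM_graph (B : H →L[ℂ] H) (a b : H) :
    (a, b) ∈ (ofCLM B).graph ↔ b = B a := by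
  rw [LinearPMap.mem_graph_iff]
  constructor
  · rintro ⟨⟨z, hz⟩, h1, h2⟩
    simp only at h1 h2
    subst h1
    exact h2.symm
  · rintro rfl
    exact ⟨⟨a, trivial⟩, rfl, rfl⟩

theorem stmt15 (B : H →L[ℂ] H) (A : H →ₗ.[ℂ] H) (n : ℕ) (hn : 2 ≤ n)
    (hclosed : (pComp (ofCLM (B ^ n)) A).IsClosed)
    (hclosable : (pComp (ofCLM B) A).IsClosable) :
    (pComp (ofCLM B) A).IsClosed := by
  obtain ⟨k, rfl⟩ : ∃ k, n = k + 1 := ⟨n - 1, (Nat.succ_pred_eq_of_pos (by omega)).symm⟩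
  obtain ⟨f', hf'⟩ := hclosable
  apply isClosed_of_closure_subset
  rintro ⟨x, y⟩ hp
  set Φ : H × H →L[ℂ] H × H := (ContinuousLinearMap.id ℂ H).prodMap (B ^ k) with hΦ
  have hmaps : Set.MapsTo Φ (pComp (ofCLM B) A).graph (pComp (ofCLM (B ^ (k + 1))) A).graph := by
    rintro ⟨a, b⟩ hab
    rw [pComp_graph_s15, SetLike.mem_coe, mem_compGraph_iff] at hab ⊢
    obtain ⟨w, hw1, hw2⟩ := hab
    rw [mem_ofCLM_graph] at hw2
    refine ⟨w, hw1, ?_⟩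
    rw [mem_ofCLM_graph]
    show (B ^ k) b = (B ^ (k + 1)) w
    rw [show b = B w from hw2, pow_succ]
    rfl
  have hΦp : Φ (x, y) ∈ (pComp (ofCLM (B ^ (k + 1))) A).graph := by
    have := map_mem_closure Φ.continuous hp hmaps
    rwa [hclosed.closure_eq] at this
  rw [pComp_graph_s15, mem_compGraph_iff] at hΦp
  obtain ⟨w, hw1, _⟩ := hΦp
  have hxBw : (x, B w) ∈ (pComp (ofCLM B) A).graph := by
    rw [pComp_graph_s15, mem_compGraph_iff]
    exact ⟨w, hw1, (mem_ofCLM_graph B w (B w)).mpr rfl⟩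
  -- both (x, y) and (x, B w) are in the closure, which is the graph f'
  have hcl : (closure ((pComp (ofCLM B) A).graph : Set (H × H))) = (f'.graph : Set (H × H)) := by
    rw [← hf', Submodule.topologicalClosure_coe]
  have h1 : (x, y) ∈ f'.graph := by rw [← SetLike.mem_coe, ← hcl]; exact hp
  have h2 : (x, B w) ∈ f'.graph := by
    rw [← SetLike.mem_coe, ← hcl]
    exact subset_closure hxBw
  have hd : ((x, y) - (x, B w)) ∈ f'.graph := f'.graph.sub_mem h1 h2
  have : y - B w = 0 := f'.graph_fst_eq_zero_snd hd (by simp)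
  have hyw : y = B w := by rwa [sub_eq_zero] at this
  rw [hyw]
  exact hxBw


end FP
end
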